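/- (Suboptimality of greedy query selection) There exist a uniform random variable P on 8 outcomes and four binary queries q_A, q_B, q_C, q_D each with I(P; qᵢ) = 1 bit, such that max over pairs not containing q_B of I(P; pair) = 2 bits while every pair containing q_B has I(P; pair) = 3 − (3/4)log₂3 < 2 bits; hence the single-step (greedy) mutual-information criterion does not distinguish the globally optimal first query. -/

import Mathlib

open Finset
/-- Mutual information (in bits) between a uniform variable on `Fin 8` and the
deterministic query `f`, written as the double sum
`∑_{p,a} Pr(p,a) log₂ (Pr(p,a) / (Pr(p) Pr(a)))`. -/
noncomputable def mutualInfo8 {α : Type*} [Fintype α] [DecidableEq α] (f : Fin 8 → α) : ℝ :=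
  ∑ p : Fin 8, ∑ a : α,
    (if f p = a then (1 : ℝ) / 8 else 0) *
      Real.logb 2 ((if f p = a then (1 : ℝ) / 8 else 0) /
        ((1 / 8) * ((({p' : Fin 8 | f p' = a} : Finset (Fin 8)).card : ℝ) / 8)))


lemma mi_eq {α : Type*} [Fintype α] [DecidableEq α] (f : Fin 8 → α) :
    mutualInfo8 f = ∑ p : Fin 8,
      (1 / 8 : ℝ) * Real.logb 2 (8 / (({p' : Fin 8 | f p' = f p} : Finset (Fin 8)).card : ℝ)) := by
  unfold mutualInfo8
  refine Finset.sum_congr rfl fun p _ => ?_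
  rw [Finset.sum_eq_single (f p)]
  · set c : ℝ := (({p' : Fin 8 | f p' = f p} : Finset (Fin 8)).card : ℝ)
    simp only [if_pos rfl]
    congr 1
    rcases eq_or_ne c 0 with h | h
    · simp [h]
    · field_simp
      norm_num
  · intro a _ ha
    simp [Ne.symm ha]
  · simp

lemma logb2_4 : Real.logb 2 4 = 2 := by
  rw [show (4:ℝ) = 2 ^ (2:ℕ) by norm_num, Real.logb_pow]
  simp

lemma logb2_8 : Real.logb 2 8 = 3 := by
  rw [show (8:ℝ) = 2 ^ (3:ℕ) by norm_num, Real.logb_pow]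
  simp

lemma logb2_83 : Real.logb 2 (8/3) = 3 - Real.logb 2 3 := by
  rw [Real.logb_div (by norm_num) (by norm_num), logb2_8]

lemma lt_two : 3 - (3 / 4) * Real.logb 2 3 < 2 := by
  have h : (4:ℝ)/3 < Real.logb 2 3 := by
    rw [Real.lt_logb_iff_rpow_lt (by norm_num) (by norm_num)]
    have h16 : ((2:ℝ) ^ ((4:ℝ)/3)) ^ (3:ℕ) = 16 := by
      rw [← Real.rpow_natCast ((2:ℝ) ^ ((4:ℝ)/3)) 3, ← Real.rpow_mul (by norm_num)]
      norm_num
    by_contra h'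
    push_neg at h'
    have h27 : (3:ℝ)^(3:ℕ) ≤ ((2:ℝ) ^ ((4:ℝ)/3)) ^ (3:ℕ) := pow_le_pow_left₀ (by norm_num) h' 3
    rw [h16] at h27
    norm_num at h27
  linarith

/-- Suboptimality of greedy query selection: four binary queries on a uniform
variable over 8 programs, each with 1 bit of mutual information, such that every
pair avoiding `q_B` attains 2 bits while every pair containing `q_B` attains only
`3 - (3/4)log₂ 3 < 2` bits. -/
theorem greedy_query_selection_suboptimal :
    ∃ qA qB qC qD : Fin 8 → Bool,
      qA = (fun p => decide (p.val ∈ ({0, 1, 2, 3} : Set ℕ))) ∧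
      qB = (fun p => decide (p.val ∈ ({3, 4, 5, 6} : Set ℕ))) ∧
      qC = (fun p => decide (p.val ∈ ({2, 3, 4, 5} : Set ℕ))) ∧
      qD = (fun p => decide (p.val ∈ ({1, 2, 5, 7} : Set ℕ))) ∧
      mutualInfo8 qA = 1 ∧ mutualInfo8 qB = 1 ∧
      mutualInfo8 qC = 1 ∧ mutualInfo8 qD = 1 ∧
      mutualInfo8 (fun p => (qA p, qC p)) = 2 ∧
      mutualInfo8 (fun p => (qA p, qD p)) = 2 ∧
      mutualInfo8 (fun p => (qC p, qD p)) = 2 ∧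
      mutualInfo8 (fun p => (qA p, qB p)) = 3 - (3 / 4) * Real.logb 2 3 ∧
      mutualInfo8 (fun p => (qB p, qC p)) = 3 - (3 / 4) * Real.logb 2 3 ∧
      mutualInfo8 (fun p => (qB p, qD p)) = 3 - (3 / 4) * Real.logb 2 3 ∧
      3 - (3 / 4) * Real.logb 2 3 < 2 := by
  refine ⟨(fun p : Fin 8 => decide (p.val ∈ ({0, 1, 2, 3} : Set ℕ))), (fun p : Fin 8 => decide (p.val ∈ ({3, 4, 5, 6} : Set ℕ))), (fun p : Fin 8 => decide (p.val ∈ ({2, 3, 4, 5} : Set ℕ))), (fun p : Fin 8 => decide (p.val ∈ ({1, 2, 5, 7} : Set ℕ))), rfl, rfl, rfl, rfl, ?_, ?_, ?_, ?_, ?_, ?_, ?_, ?_, ?_, ?_, lt_two⟩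
  · rw [mi_eq]
    have h : ∀ p : Fin 8, (({p' : Fin 8 | (fun p : Fin 8 => decide (p.val ∈ ({0, 1, 2, 3} : Set ℕ))) p' = (fun p : Fin 8 => decide (p.val ∈ ({0, 1, 2, 3} : Set ℕ))) p} : Finset (Fin 8)).card) = 4 := by decide
    simp only [h]
    norm_num [Fin.sum_univ_succ]
  · rw [mi_eq]
    have h : ∀ p : Fin 8, (({p' : Fin 8 | (fun p : Fin 8 => decide (p.val ∈ ({3, 4, 5, 6} : Set ℕ))) p' = (fun p : Fin 8 => decide (p.val ∈ ({3, 4, 5, 6} : Set ℕ))) p} : Finset (Fin 8)).card) = 4 := by decide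
    simp only [h]
    norm_num [Fin.sum_univ_succ]
  · rw [mi_eq]
    have h : ∀ p : Fin 8, (({p' : Fin 8 | (fun p : Fin 8 => decide (p.val ∈ ({2, 3, 4, 5} : Set ℕ))) p' = (fun p : Fin 8 => decide (p.val ∈ ({2, 3, 4, 5} : Set ℕ))) p} : Finset (Fin 8)).card) = 4 := by decide
    simp only [h]
    norm_num [Fin.sum_univ_succ]
  · rw [mi_eq]
    have h : ∀ p : Fin 8, (({p' : Fin 8 | (fun p : Fin 8 => decide (p.val ∈ ({1, 2, 5, 7} : Set ℕ))) p' = (fun p : Fin 8 => decide (p.val ∈ ({1, 2, 5, 7} : Set ℕ))) p} : Finset (Fin 8)).card) = 4 := by decide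
    simp only [h]
    norm_num [Fin.sum_univ_succ]
  · rw [mi_eq]
    have h : ∀ p : Fin 8, (({p' : Fin 8 | (fun p : Fin 8 => ((fun p : Fin 8 => decide (p.val ∈ ({0, 1, 2, 3} : Set ℕ))) p, (fun p : Fin 8 => decide (p.val ∈ ({2, 3, 4, 5} : Set ℕ))) p)) p' = (fun p : Fin 8 => ((fun p : Fin 8 => decide (p.val ∈ ({0, 1, 2, 3} : Set ℕ))) p, (fun p : Fin 8 => decide (p.val ∈ ({2, 3, 4, 5} : Set ℕ))) p)) p} : Finset (Fin 8)).card) = 2 := by decide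
    simp only [h]
    norm_num [Fin.sum_univ_succ, logb2_4]
  · rw [mi_eq]
    have h : ∀ p : Fin 8, (({p' : Fin 8 | (fun p : Fin 8 => ((fun p : Fin 8 => decide (p.val ∈ ({0, 1, 2, 3} : Set ℕ))) p, (fun p : Fin 8 => decide (p.val ∈ ({1, 2, 5, 7} : Set ℕ))) p)) p' = (fun p : Fin 8 => ((fun p : Fin 8 => decide (p.val ∈ ({0, 1, 2, 3} : Set ℕ))) p, (fun p : Fin 8 => decide (p.val ∈ ({1, 2, 5, 7} : Set ℕ))) p)) p} : Finset (Fin 8)).card) = 2 := by decide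
    simp only [h]
    norm_num [Fin.sum_univ_succ, logb2_4]
  · rw [mi_eq]
    have h : ∀ p : Fin 8, (({p' : Fin 8 | (fun p : Fin 8 => ((fun p : Fin 8 => decide (p.val ∈ ({2, 3, 4, 5} : Set ℕ))) p, (fun p : Fin 8 => decide (p.val ∈ ({1, 2, 5, 7} : Set ℕ))) p)) p' = (fun p : Fin 8 => ((fun p : Fin 8 => decide (p.val ∈ ({2, 3, 4, 5} : Set ℕ))) p, (fun p : Fin 8 => decide (p.val ∈ ({1, 2, 5, 7} : Set ℕ))) p)) p} : Finset (Fin 8)).card) = 2 := by decide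
    simp only [h]
    norm_num [Fin.sum_univ_succ, logb2_4]
  · rw [mi_eq]
    have h : ∀ p : Fin 8, (({p' : Fin 8 | (fun p : Fin 8 => ((fun p : Fin 8 => decide (p.val ∈ ({0, 1, 2, 3} : Set ℕ))) p, (fun p : Fin 8 => decide (p.val ∈ ({3, 4, 5, 6} : Set ℕ))) p)) p' = (fun p : Fin 8 => ((fun p : Fin 8 => decide (p.val ∈ ({0, 1, 2, 3} : Set ℕ))) p, (fun p : Fin 8 => decide (p.val ∈ ({3, 4, 5, 6} : Set ℕ))) p)) p} : Finset (Fin 8)).card) = ![3,3,3,1,3,3,3,1] p := by decide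
    simp only [h]
    norm_num [Fin.sum_univ_succ, logb2_8, logb2_83]
    ring
  · rw [mi_eq]
    have h : ∀ p : Fin 8, (({p' : Fin 8 | (fun p : Fin 8 => ((fun p : Fin 8 => decide (p.val ∈ ({3, 4, 5, 6} : Set ℕ))) p, (fun p : Fin 8 => decide (p.val ∈ ({2, 3, 4, 5} : Set ℕ))) p)) p' = (fun p : Fin 8 => ((fun p : Fin 8 => decide (p.val ∈ ({3, 4, 5, 6} : Set ℕ))) p, (fun p : Fin 8 => decide (p.val ∈ ({2, 3, 4, 5} : Set ℕ))) p)) p} : Finset (Fin 8)).card) = ![3,3,1,3,3,3,1,3] p := by decide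
    simp only [h]
    norm_num [Fin.sum_univ_succ, logb2_8, logb2_83]
    ring
  · rw [mi_eq]
    have h : ∀ p : Fin 8, (({p' : Fin 8 | (fun p : Fin 8 => ((fun p : Fin 8 => decide (p.val ∈ ({3, 4, 5, 6} : Set ℕ))) p, (fun p : Fin 8 => decide (p.val ∈ ({1, 2, 5, 7} : Set ℕ))) p)) p' = (fun p : Fin 8 => ((fun p : Fin 8 => decide (p.val ∈ ({3, 4, 5, 6} : Set ℕ))) p, (fun p : Fin 8 => decide (p.val ∈ ({1, 2, 5, 7} : Set ℕ))) p)) p} : Finset (Fin 8)).card) = ![1,3,3,3,3,1,3,3] p := by decide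
    simp only [h]
    norm_num [Fin.sum_univ_succ, logb2_8, logb2_83]
    ring
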